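/- Let Γ_1, …, Γ_r ⊆ ℕ^d be finite nonempty sets and let α > 0 be a real number. Then the collection of ideals of ℂ[x_1,…,x_d] of the form ⟨x^m : m ∈ ℕ^d and m + 𝟙 ∈ interior(λ_1·conv(Γ_1) + ⋯ + λ_r·conv(Γ_r) + ℝ^d_{≥0})⟩, as λ = (λ_1,…,λ_r) ranges over all vectors in ℝ^r_{≥0} with λ_1 + ⋯ + λ_r = α, is a finite set of ideals. (This is the monomial incarnation of the paper's claim that there are only finitely many distinct multiplier ideals J(a_1^{λ_1}⋯a_r^{λ_r}) with λ_1+⋯+λ_r = α.) -/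

import Mathlib

open Pointwise

/-- The monomial `x^γ` of `ℂ[x_1,…,x_d]` with exponent vector `γ : Fin d → ℕ`. -/
noncomputable def monoOf {d : ℕ} (γ : Fin d → ℕ) : MvPolynomial (Fin d) ℂ :=
  MvPolynomial.monomial (Finsupp.equivFunOnFinite.symm γ) 1

/-- The real point of `ℝ^d` corresponding to `γ : Fin d → ℕ`. -/
def toReal {d : ℕ} (γ : Fin d → ℕ) : Fin d → ℝ := fun j => (γ j : ℝ)

lemma mono_mul {d : ℕ} (a b : Fin d → ℕ) (h : ∀ j, b j ≤ a j) :
    monoOf a = monoOf (fun j => a j - b j) * monoOf b := by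
  unfold monoOf
  rw [MvPolynomial.monomial_mul, one_mul]
  have key : (Finsupp.equivFunOnFinite.symm fun j => a j - b j) + Finsupp.equivFunOnFinite.symm b
      = Finsupp.equivFunOnFinite.symm a := by
    ext j
    have := h j
    simp only [Finsupp.add_apply, Finsupp.equivFunOnFinite_symm_apply_apply]
    omega
  rw [key]

lemma step {d : ℕ} (Q : Set (Fin d → ℝ)) (B : ℝ)
    (hQ : ∀ q ∈ Q, ∀ j, q j ≤ B)
    (v : Fin d → ℝ) (j : Fin d) (hvj : B + 2 ≤ v j)
    (hv : v ∈ interior (Q + {w : Fin d → ℝ | ∀ k, 0 ≤ w k})) :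
    (v - Pi.single j 1) ∈ interior (Q + {w : Fin d → ℝ | ∀ k, 0 ≤ w k}) := by
  rw [mem_interior_iff_mem_nhds, Metric.mem_nhds_iff] at hv ⊢
  obtain ⟨ε, hε, hball⟩ := hv
  refine ⟨min ε 1, by positivity, ?_⟩
  intro u hu
  rw [Metric.mem_ball] at hu
  have hd : dist (u + Pi.single j 1) v < ε := by
    have : u + Pi.single j 1 - v = u - (v - Pi.single j 1) := by abel
    rw [dist_eq_norm, this, ← dist_eq_norm]
    exact lt_of_lt_of_le hu (min_le_left _ _)
  obtain ⟨q, hq, w, hw, hqw⟩ := Set.mem_add.mp (hball (Metric.mem_ball.mpr hd))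
  have heq : q + (w - Pi.single j 1) = u := by
    have h : q + (w - Pi.single j 1) = q + w - Pi.single j 1 := by abel
    rw [h, hqw]; abel
  refine Set.mem_add.mpr ⟨q, hq, w - Pi.single j 1, ?_, heq⟩
  intro k
  rcases eq_or_ne k j with rfl | hk
  · have h1 : q k + w k = u k + 1 := by
      have := congrFun hqw k
      simpa [Pi.single_eq_same] using this
    have h2 : dist (u k) ((v - Pi.single k 1 : Fin d → ℝ) k) ≤ dist u (v - Pi.single k 1) :=
      dist_le_pi_dist u (v - Pi.single k 1) k
    have h3 : dist (u k) (v k - 1) < 1 := by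
      have hvv : ((v - Pi.single k 1 : Fin d → ℝ) k) = v k - 1 := by
        simp [Pi.single_eq_same]
      rw [hvv] at h2
      exact lt_of_le_of_lt h2 (lt_of_lt_of_le hu (min_le_right _ _))
    have h4 : |u k - (v k - 1)| < 1 := by rwa [Real.dist_eq] at h3
    have h5 : q k ≤ B := hQ q hq k
    have h6 : (w - Pi.single k 1 : Fin d → ℝ) k = w k - 1 := by simp [Pi.single_eq_same]
    rw [h6]
    have := abs_lt.mp h4
    linarith [this.1]
  · have h6 : (w - Pi.single j 1 : Fin d → ℝ) k = w k := by simp [Pi.single_eq_of_ne hk]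
    rw [h6]; exact hw k

lemma reduce {d : ℕ} (M : ℕ) (P : (Fin d → ℕ) → Prop)
    (hstep : ∀ m, P m → ∀ j, M < m j → P (Function.update m j (m j - 1))) :
    ∀ n (m : Fin d → ℕ), (∑ j, m j = n) → P m →
      ∃ m₀, (∀ j, m₀ j ≤ M) ∧ (∀ j, m₀ j ≤ m j) ∧ P m₀ := by
  intro n
  induction n using Nat.strong_induction_on with
  | _ n ih =>
    intro m hsum hm
    by_cases hbig : ∃ j, M < m j
    · obtain ⟨j, hj⟩ := hbig
      set m' := Function.update m j (m j - 1) with hm'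
      have hle : ∀ k, m' k ≤ m k := by
        intro k
        rcases eq_or_ne k j with rfl | hk
        · simp [hm', Function.update_self]
        · simp [hm', Function.update_of_ne hk]
      have hlt : ∑ k, m' k < n := by
        rw [← hsum]
        refine Finset.sum_lt_sum (fun k _ => hle k) ⟨j, Finset.mem_univ j, ?_⟩
        simp only [hm', Function.update_self]
        omega
      obtain ⟨m₀, h1, h2, h3⟩ := ih _ hlt m' rfl (hstep m hm j hj)
      exact ⟨m₀, h1, fun k => (h2 k).trans (hle k), h3⟩
    · push_neg at hbig
      exact ⟨m, hbig, fun _ => le_rfl, hm⟩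

lemma sum_sets_bound {d : ℕ} {ι : Type*} (s : Finset ι) (f : ι → Set (Fin d → ℝ)) (b : ι → ℝ)
    (h : ∀ i ∈ s, ∀ x ∈ f i, ∀ j, x j ≤ b i) :
    ∀ x ∈ ∑ i ∈ s, f i, ∀ j, x j ≤ ∑ i ∈ s, b i := by
  induction s using Finset.cons_induction with
  | empty =>
    intro x hx j
    simp only [Finset.sum_empty] at hx ⊢
    rw [Set.mem_zero] at hx
    simp [hx]
  | cons a s ha ih =>
    intro x hx j
    rw [Finset.sum_cons] at hx
    obtain ⟨y, hy, z, hz, rfl⟩ := Set.mem_add.mp hx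
    rw [Finset.sum_cons]
    have h1 := h a (Finset.mem_cons_self a s) y hy j
    have h2 := ih (fun i hi => h i (Finset.mem_cons_of_mem hi)) z hz j
    simpa using add_le_add h1 h2

lemma box_finite {d M : ℕ} : Set.Finite {m : Fin d → ℕ | ∀ j, m j ≤ M} := by
  apply Set.Finite.subset (Set.finite_Icc (0 : Fin d → ℕ) (fun _ => M))
  intro m hm
  exact ⟨fun j => Nat.zero_le _, fun j => hm j⟩

lemma hull_bound {d : ℕ} (G : Finset (Fin d → ℕ)) (C : ℕ) (hC : ∀ γ ∈ G, ∀ j, γ j ≤ C)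
    (c : ℝ) (hc : 0 ≤ c) :
    ∀ x ∈ c • convexHull ℝ (toReal '' (↑G : Set (Fin d → ℕ))), ∀ j, x j ≤ c * C := by
  intro x hx j
  obtain ⟨y, hy, rfl⟩ := hx
  have hsub : convexHull ℝ (toReal '' (↑G : Set (Fin d → ℕ))) ⊆
      Set.univ.pi (fun _ : Fin d => Set.Iic (C : ℝ)) := by
    apply convexHull_min
    · rintro _ ⟨γ, hγ, rfl⟩ k _
      simp only [Set.mem_Iic, toReal]
      exact_mod_cast hC γ hγ k
    · exact convex_pi fun _ _ => convex_Iic _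
  have := hsub hy j (Set.mem_univ j)
  calc (c • y) j = c * y j := rfl
    _ ≤ c * C := mul_le_mul_of_nonneg_left this hc

/-- Finiteness of the collection of (monomial incarnations of) multiplier
ideals `J(a_1^{λ_1}⋯a_r^{λ_r})` as `λ` ranges over nonnegative real vectors
with `λ_1 + ⋯ + λ_r = α`. -/
theorem stmt9 {d r : ℕ} (Γ : Fin r → Finset (Fin d → ℕ))
    (hne : ∀ i, (Γ i).Nonempty) (α : ℝ) (hα : 0 < α) :
    Set.Finite {I : Ideal (MvPolynomial (Fin d) ℂ) |
      ∃ lam : Fin r → ℝ, (∀ i, 0 ≤ lam i) ∧ (∑ i, lam i = α) ∧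
        I = Ideal.span {p : MvPolynomial (Fin d) ℂ |
          ∃ m : Fin d → ℕ,
            (fun j => (m j : ℝ) + 1) ∈
              interior ((∑ i, lam i • convexHull ℝ (toReal '' (↑(Γ i) : Set (Fin d → ℕ)))) +
                {v : Fin d → ℝ | ∀ j, 0 ≤ v j}) ∧
            p = monoOf m}} := by
  classical
  -- the global bound on coordinates of points of the Newton polytopes
  set C : ℕ := Finset.univ.sup (fun i => (Γ i).sup fun γ => Finset.univ.sup γ) with hCdef
  have hC : ∀ i, ∀ γ ∈ Γ i, ∀ j, γ j ≤ C := by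
    intro i γ hγ j
    calc γ j ≤ Finset.univ.sup γ := Finset.le_sup (Finset.mem_univ j)
      _ ≤ (Γ i).sup (fun γ => Finset.univ.sup γ) := Finset.le_sup hγ
      _ ≤ C := Finset.le_sup (f := fun i => (Γ i).sup fun γ => Finset.univ.sup γ)
        (Finset.mem_univ i)
  set M : ℕ := ⌈α * C⌉₊ + 1 with hMdef
  -- the finite box of exponents
  have hfin : Set.Finite ((fun T : Set (Fin d → ℕ) =>
      Ideal.span {p : MvPolynomial (Fin d) ℂ | ∃ m ∈ T, p = monoOf m}) ''
      {T | T ⊆ {m : Fin d → ℕ | ∀ j, m j ≤ M}}) :=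
    Set.Finite.image _ (Set.Finite.finite_subsets box_finite)
  apply Set.Finite.subset hfin
  rintro I ⟨lam, hlam0, hlamsum, rfl⟩
  set Q : Set (Fin d → ℝ) :=
    ∑ i, lam i • convexHull ℝ (toReal '' (↑(Γ i) : Set (Fin d → ℕ))) with hQdef
  set S : Set (Fin d → ℕ) := {m : Fin d → ℕ |
      (fun j => (m j : ℝ) + 1) ∈ interior (Q + {v : Fin d → ℝ | ∀ j, 0 ≤ v j})} with hSdef
  have hQbound : ∀ q ∈ Q, ∀ j, q j ≤ α * C := by
    intro q hq j
    have := sum_sets_bound Finset.univ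
      (fun i => lam i • convexHull ℝ (toReal '' (↑(Γ i) : Set (Fin d → ℕ))))
      (fun i => lam i * C)
      (fun i _ => hull_bound (Γ i) C (hC i) (lam i) (hlam0 i)) q hq j
    calc q j ≤ ∑ i, lam i * C := this
      _ = (∑ i, lam i) * C := (Finset.sum_mul _ _ _).symm
      _ = α * C := by rw [hlamsum]
  have hαC : (0:ℝ) ≤ α * C := by positivity
  -- the step: we can decrease a coordinate exceeding M while staying in S
  have hstepS : ∀ m ∈ S, ∀ j, M < m j → Function.update m j (m j - 1) ∈ S := by
    intro m hm j hj
    have key := step Q (α * C) hQbound (fun k => (m k : ℝ) + 1) j ?_ hm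
    · have heq : (fun k => ((Function.update m j (m j - 1) k : ℕ) : ℝ) + 1)
          = (fun k => (m k : ℝ) + 1) - Pi.single j 1 := by
        funext k
        rcases eq_or_ne k j with rfl | hk
        · have h1 : (1:ℕ) ≤ m k := le_trans (Nat.succ_le_succ (Nat.zero_le _)) hj
          simp only [Function.update_self, Pi.sub_apply, Pi.single_eq_same]
          rw [Nat.cast_sub h1]
          push_cast
          ring
        · simp [Function.update_of_ne hk, Pi.single_eq_of_ne hk]
      show (fun k => ((Function.update m j (m j - 1) k : ℕ) : ℝ) + 1)
          ∈ interior (Q + {v : Fin d → ℝ | ∀ j, 0 ≤ v j})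
      rw [heq]
      exact key
    · -- α * C + 2 ≤ m j + 1
      have h1 : (M : ℝ) + 1 ≤ (m j : ℝ) := by
        have h0 : M + 1 ≤ m j := hj
        exact_mod_cast h0
      have h2 : α * C ≤ (⌈α * C⌉₊ : ℝ) := Nat.le_ceil _
      have h3 : (M : ℝ) = (⌈α * C⌉₊ : ℝ) + 1 := by exact_mod_cast rfl
      rw [h3] at h1
      show α * (C:ℝ) + 2 ≤ (m j : ℝ) + 1
      linarith
  -- membership in the image
  refine ⟨S ∩ {m : Fin d → ℕ | ∀ j, m j ≤ M}, Set.inter_subset_right, ?_⟩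
  apply le_antisymm
  · -- span of box generators ⊆ span of all generators
    rw [Ideal.span_le]
    rintro p ⟨m, hm, rfl⟩
    exact Ideal.subset_span ⟨m, hm.1, rfl⟩
  · -- span of all generators ⊆ span of box generators
    rw [Ideal.span_le]
    rintro p ⟨m, hm, rfl⟩
    have hmS : m ∈ S := hm
    obtain ⟨m₀, hbox, hle, hmem⟩ := reduce M (· ∈ S) hstepS (∑ j, m j) m rfl hmS
    rw [mono_mul m m₀ hle]
    exact Ideal.mul_mem_left _ _ (Ideal.subset_span ⟨m₀, ⟨hmem, hbox⟩, rfl⟩)
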